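/- arXiv:2304.08889 — 5 statements merged into one kernel-verified Lean document; each statement's English description precedes it below -/
import Mathlib

section
/- Let f : ℝⁿ → ℝⁿ be continuous, X ⊆ ℝⁿ closed, M ⊆ X closed, and T > 0. Suppose v : ℝ × ℝⁿ → ℝ is of class C¹ and satisfies: ∂_t v(t,y) + ⟨∇_x v(t,y), f(y)⟩ ≤ 0 for all (t,y) ∈ [0,T] × X, and v(T,y) ≥ 0 for all y ∈ M. Then the region of attraction R_T^M is contained in {x₀ ∈ ℝⁿ : v(0,x₀) ≥ 0}. -/
open Set

/-- The region of attraction `R_T^M`: initial conditions `x₀` from which some solution of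
`x' = f(x)` stays in `X` on `[0,T]` and hits the target `M` at time `T`. -/
def RoA {n : ℕ} (f : EuclideanSpace ℝ (Fin n) → EuclideanSpace ℝ (Fin n))
    (X M : Set (EuclideanSpace ℝ (Fin n))) (T : ℝ) : Set (EuclideanSpace ℝ (Fin n)) :=
  {x₀ | ∃ x : ℝ → EuclideanSpace ℝ (Fin n), x 0 = x₀ ∧
    (∀ t ∈ Icc (0 : ℝ) T, HasDerivAt x (f (x t)) t) ∧
    (∀ t ∈ Icc (0 : ℝ) T, x t ∈ X) ∧ x T ∈ M}

/-- if `v` is `C¹`, decreases along the flow of `f` on `[0,T] × X`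
(the derivative of `v` along trajectories, `∂ₜ v + ⟨∇ₓ v, f⟩`, encoded as the Fréchet
derivative of `v` applied to `(1, f y)`, is nonpositive there), and `v(T,·) ≥ 0` on `M`,
then `R_T^M ⊆ {x₀ : v(0,x₀) ≥ 0}`. -/
theorem sostab_stmt1 {n : ℕ}
    (f : EuclideanSpace ℝ (Fin n) → EuclideanSpace ℝ (Fin n)) (hf : Continuous f)
    (X : Set (EuclideanSpace ℝ (Fin n))) (hX : IsClosed X)
    (M : Set (EuclideanSpace ℝ (Fin n))) (hM : IsClosed M) (hMX : M ⊆ X)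
    (T : ℝ) (hT : 0 < T)
    (v : ℝ × EuclideanSpace ℝ (Fin n) → ℝ) (hv : ContDiff ℝ 1 v)
    (hdecr : ∀ t ∈ Icc (0 : ℝ) T, ∀ y ∈ X, fderiv ℝ v (t, y) (1, f y) ≤ 0)
    (hvT : ∀ y ∈ M, 0 ≤ v (T, y)) :
    RoA f X M T ⊆ {x₀ | 0 ≤ v (0, x₀)} := by
  rintro x₀ ⟨x, hx0, hderiv, hmemX, hxT⟩
  set g : ℝ → ℝ := fun t => v (t, x t) with hg
  have hgderiv : ∀ t ∈ Icc (0 : ℝ) T,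
      HasDerivAt g (fderiv ℝ v (t, x t) (1, f (x t))) t := by
    intro t ht
    have hc : HasDerivAt (fun s : ℝ => ((s, x s) : ℝ × EuclideanSpace ℝ (Fin n)))
        (1, f (x t)) t := HasDerivAt.prodMk (hasDerivAt_id t) (hderiv t ht)
    have hvd : HasFDerivAt v (fderiv ℝ v (t, x t)) (t, x t) :=
      (hv.differentiable one_ne_zero (t, x t)).hasFDerivAt
    exact hvd.comp_hasDerivAt t hc
  have hanti : AntitoneOn g (Icc 0 T) := by
    apply antitoneOn_of_deriv_nonpos (convex_Icc 0 T)
    · intro t ht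
      exact (hgderiv t ht).differentiableAt.continuousAt.continuousWithinAt
    · intro t ht
      rw [interior_Icc] at ht
      exact (hgderiv t (Ioo_subset_Icc_self ht)).differentiableAt.differentiableWithinAt
    · intro t ht
      rw [interior_Icc] at ht
      have ht' := Ioo_subset_Icc_self ht
      rw [(hgderiv t ht').deriv]
      exact hdecr t ht' (x t) (hmemX t ht')
  have h0 : (0 : ℝ) ∈ Icc (0 : ℝ) T := ⟨le_rfl, hT.le⟩
  have hTm : T ∈ Icc (0 : ℝ) T := ⟨hT.le, le_rfl⟩
  have := hanti h0 hTm hT.le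
  have h2 : (0 : ℝ) ≤ g T := by
    have := hvT (x T) hxT
    simpa [hg] using this
  have : (0 : ℝ) ≤ g 0 := le_trans h2 (hanti h0 hTm hT.le)
  simpa [hg, hx0] using this
end

section
/- Let f : ℝⁿ → ℝⁿ be continuous, X ⊆ ℝⁿ closed, M ⊆ X closed, and T > 0. Suppose v : ℝ × ℝⁿ → ℝ is of class C¹ and w : ℝⁿ → ℝ satisfy: w(y) ≥ v(0,y) + 1 for all y ∈ X, ∂_t v(t,y) + ⟨∇_x v(t,y), f(y)⟩ ≤ 0 for all (t,y) ∈ [0,T] × X, and v(T,y) ≥ 0 for all y ∈ M. Then the region of attraction R_T^M is contained in {x₀ ∈ ℝⁿ : w(x₀) ≥ 1}. -/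
open Set

/-- if `v` is `C¹`, `w ≥ v(0,·) + 1` on `X`, `v` decreases along the flow of `f`
on `[0,T] × X` (the derivative `∂ₜ v + ⟨∇ₓ v, f⟩` along trajectories, encoded as the Fréchet
derivative of `v` applied to `(1, f y)`, is nonpositive there), and `v(T,·) ≥ 0` on `M`,
then `R_T^M ⊆ {x₀ : w(x₀) ≥ 1}`. -/
theorem sostab_stmt2 {n : ℕ}
    (f : EuclideanSpace ℝ (Fin n) → EuclideanSpace ℝ (Fin n)) (hf : Continuous f)
    (X : Set (EuclideanSpace ℝ (Fin n))) (hX : IsClosed X)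
    (M : Set (EuclideanSpace ℝ (Fin n))) (hM : IsClosed M) (hMX : M ⊆ X)
    (T : ℝ) (hT : 0 < T)
    (v : ℝ × EuclideanSpace ℝ (Fin n) → ℝ) (hv : ContDiff ℝ 1 v)
    (w : EuclideanSpace ℝ (Fin n) → ℝ)
    (hwv : ∀ y ∈ X, v (0, y) + 1 ≤ w y)
    (hdecr : ∀ t ∈ Icc (0 : ℝ) T, ∀ y ∈ X, fderiv ℝ v (t, y) (1, f y) ≤ 0)
    (hvT : ∀ y ∈ M, 0 ≤ v (T, y)) :
    RoA f X M T ⊆ {x₀ | 1 ≤ w x₀} := by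
  rintro x₀ ⟨x, hx0, hx', hxX, hxM⟩
  set g : ℝ → ℝ := fun t => v (t, x t) with hg
  have hder : ∀ t ∈ Icc (0 : ℝ) T,
      HasDerivAt g (fderiv ℝ v (t, x t) (1, f (x t))) t := by
    intro t ht
    have hc : HasDerivAt (fun s => ((s : ℝ), x s)) (1, f (x t)) t :=
      (hasDerivAt_id t).prodMk (hx' t ht)
    have hvd : HasFDerivAt v (fderiv ℝ v (t, x t)) (t, x t) :=
      (hv.differentiable one_ne_zero (t, x t)).hasFDerivAt
    exact hvd.comp_hasDerivAt t hc
  have hanti : AntitoneOn g (Icc 0 T) := by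
    apply antitoneOn_of_deriv_nonpos (convex_Icc 0 T)
    · exact fun t ht => ((hder t ht).continuousAt).continuousWithinAt
    · intro t ht
      rw [interior_Icc] at ht
      exact ((hder t (Ioo_subset_Icc_self ht)).differentiableAt).differentiableWithinAt
    · intro t ht
      rw [interior_Icc] at ht
      have ht' := Ioo_subset_Icc_self ht
      rw [(hder t ht').deriv]
      exact hdecr t ht' (x t) (hxX t ht')
  have h0 : (0 : ℝ) ∈ Icc (0 : ℝ) T := ⟨le_rfl, hT.le⟩
  have hT' : T ∈ Icc (0 : ℝ) T := ⟨hT.le, le_rfl⟩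
  have hgT : g T ≤ g 0 := hanti h0 hT' hT.le
  have h1 : (0 : ℝ) ≤ g T := hvT (x T) hxM
  have h2 : v (0, x₀) + 1 ≤ w x₀ := by
    have := hwv (x 0) (hxX 0 h0); rwa [hx0] at this
  have : v (0, x₀) = g 0 := by rw [hg]; simp [hx0]
  simp only [mem_setOf_eq]
  linarith
end

section
/- Let f : ℝⁿ → ℝⁿ be continuous, X ⊆ ℝⁿ closed, M ⊆ X closed, and T > 0. Suppose v : ℝ × ℝⁿ → ℝ is of class C¹ and w : ℝⁿ → ℝ satisfy all four constraints: w(y) ≥ 0 for all y ∈ X; w(y) ≥ v(0,y) + 1 for all y ∈ X; ∂_t v(t,y) + ⟨∇_x v(t,y), f(y)⟩ ≤ 0 for all (t,y) ∈ [0,T] × X; and v(T,y) ≥ 0 for all y ∈ M. Then w(y) ≥ 𝟙_{R_T^M}(y) for every y ∈ X, where 𝟙_{R_T^M} is the indicator function of the region of attraction R_T^M (equal to 1 on R_T^M and 0 elsewhere). -/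
open Set

/-- if `w ≥ 0` on `X`, `w ≥ v(0,·) + 1` on `X`, `v` is `C¹` and decreases along
the flow of `f` on `[0,T] × X` (the derivative `∂ₜ v + ⟨∇ₓ v, f⟩` along trajectories, encoded
as the Fréchet derivative of `v` applied to `(1, f y)`, is nonpositive there), and
`v(T,·) ≥ 0` on `M`, then `w` dominates the indicator function of `R_T^M` on `X`. -/
theorem sostab_stmt3 {n : ℕ}
    (f : EuclideanSpace ℝ (Fin n) → EuclideanSpace ℝ (Fin n)) (hf : Continuous f)
    (X : Set (EuclideanSpace ℝ (Fin n))) (hX : IsClosed X)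
    (M : Set (EuclideanSpace ℝ (Fin n))) (hM : IsClosed M) (hMX : M ⊆ X)
    (T : ℝ) (hT : 0 < T)
    (v : ℝ × EuclideanSpace ℝ (Fin n) → ℝ) (hv : ContDiff ℝ 1 v)
    (w : EuclideanSpace ℝ (Fin n) → ℝ)
    (hw0 : ∀ y ∈ X, 0 ≤ w y)
    (hwv : ∀ y ∈ X, v (0, y) + 1 ≤ w y)
    (hdecr : ∀ t ∈ Icc (0 : ℝ) T, ∀ y ∈ X, fderiv ℝ v (t, y) (1, f y) ≤ 0)
    (hvT : ∀ y ∈ M, 0 ≤ v (T, y)) :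
    ∀ y ∈ X, (RoA f X M T).indicator (fun _ => (1 : ℝ)) y ≤ w y := by
  intro y hy
  by_cases hmem : y ∈ RoA f X M T
  · rw [indicator_of_mem hmem]
    obtain ⟨x, hx0, hxd, hxX, hxT⟩ := hmem
    set g : ℝ → ℝ := fun t => v (t, x t) with hg
    have hder : ∀ t ∈ Icc (0:ℝ) T, HasDerivAt g (fderiv ℝ v (t, x t) (1, f (x t))) t := by
      intro t ht
      have h1 : HasDerivAt (fun s => ((s : ℝ), x s)) ((1 : ℝ), f (x t)) t :=
        (hasDerivAt_id t).prodMk (hxd t ht)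
      have h2 : HasFDerivAt v (fderiv ℝ v (t, x t)) (t, x t) :=
        (hv.differentiable one_ne_zero (t, x t)).hasFDerivAt
      exact h2.comp_hasDerivAt t h1
    have hanti : AntitoneOn g (Icc 0 T) := by
      apply antitoneOn_of_deriv_nonpos (convex_Icc 0 T)
      · exact fun t ht => ((hder t ht).continuousAt).continuousWithinAt
      · intro t ht
        rw [interior_Icc] at ht
        exact ((hder t (Ioo_subset_Icc_self ht)).differentiableAt).differentiableWithinAt
      · intro t ht
        rw [interior_Icc] at ht
        have h := hder t (Ioo_subset_Icc_self ht)
        rw [h.deriv]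
        exact hdecr t (Ioo_subset_Icc_self ht) (x t) (hxX t (Ioo_subset_Icc_self ht))
    have hTle : g T ≤ g 0 :=
      hanti (left_mem_Icc.2 hT.le) (right_mem_Icc.2 hT.le) hT.le
    have h0 : (0 : ℝ) ≤ g T := hvT (x T) hxT
    have : (0 : ℝ) ≤ v (0, y) := by
      have : g 0 = v (0, y) := by simp [hg, hx0]
      linarith
    have := hwv y hy
    linarith
  · rw [indicator_of_notMem hmem]
    exact hw0 y hy
end

section
/- Let f : ℝⁿ → ℝⁿ be continuous, X ⊆ ℝⁿ closed and Lebesgue-measurable, M ⊆ X closed, and T > 0, and assume the region of attraction R_T^M is Lebesgue-measurable. Suppose v : ℝ × ℝⁿ → ℝ is of class C¹ and w : ℝⁿ → ℝ is Lebesgue-integrable on X, and they satisfy: w(y) ≥ 0 for all y ∈ X; w(y) ≥ v(0,y) + 1 for all y ∈ X; ∂_t v(t,y) + ⟨∇_x v(t,y), f(y)⟩ ≤ 0 for all (t,y) ∈ [0,T] × X; and v(T,y) ≥ 0 for all y ∈ M. Then ∫_X w dx ≥ vol(R_T^M), where vol denotes n-dimensional Lebesgue measure. -/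
open Set MeasureTheory

/-- for any feasible pair `(v, w)` of the outer RoA linear program
(`w ≥ 0` on `X`, `w ≥ v(0,·) + 1` on `X`, `∂ₜ v + ⟨∇ₓ v, f⟩ ≤ 0` on `[0,T] × X`,
`v(T,·) ≥ 0` on `M`), the integral of `w` over `X` bounds the Lebesgue volume
of the region of attraction from above: `∫_X w ≥ vol(R_T^M)`. -/
theorem sostab_stmt4 {n : ℕ}
    (f : EuclideanSpace ℝ (Fin n) → EuclideanSpace ℝ (Fin n)) (hf : Continuous f)
    (X : Set (EuclideanSpace ℝ (Fin n))) (hX : IsClosed X) (hXm : MeasurableSet X)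
    (M : Set (EuclideanSpace ℝ (Fin n))) (hM : IsClosed M) (hMX : M ⊆ X)
    (T : ℝ) (hT : 0 < T)
    (hRm : MeasurableSet (RoA f X M T))
    (v : ℝ × EuclideanSpace ℝ (Fin n) → ℝ) (hv : ContDiff ℝ 1 v)
    (w : EuclideanSpace ℝ (Fin n) → ℝ) (hwint : IntegrableOn w X volume)
    (hw0 : ∀ y ∈ X, 0 ≤ w y)
    (hwv : ∀ y ∈ X, v (0, y) + 1 ≤ w y)
    (hdecr : ∀ t ∈ Icc (0 : ℝ) T, ∀ y ∈ X, fderiv ℝ v (t, y) (1, f y) ≤ 0)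
    (hvT : ∀ y ∈ M, 0 ≤ v (T, y)) :
    volume (RoA f X M T) ≤ ENNReal.ofReal (∫ y in X, w y) := by
  -- Step 1: every point of the RoA satisfies `1 ≤ w`.
  have key : ∀ x₀ ∈ RoA f X M T, 1 ≤ w x₀ := by
    rintro x₀ ⟨x, hx0, hxd, hxX, hxM⟩
    set g : ℝ → ℝ := fun t => v (t, x t) with hg
    have hgd : ∀ t ∈ Icc (0 : ℝ) T, HasDerivAt g (fderiv ℝ v (t, x t) (1, f (x t))) t := by
      intro t ht
      have h1 : HasDerivAt (fun t : ℝ => (t, x t)) ((1 : ℝ), f (x t)) t :=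
        (hasDerivAt_id t).prodMk (hxd t ht)
      exact ((hv.differentiable one_ne_zero (t, x t)).hasFDerivAt).comp_hasDerivAt t h1
    have hgc : ContinuousOn g (Icc 0 T) := fun t ht =>
      ((hgd t ht).continuousAt).continuousWithinAt
    have hanti : AntitoneOn g (Icc 0 T) := by
      apply antitoneOn_of_deriv_nonpos (convex_Icc 0 T) hgc
      · intro t ht
        rw [interior_Icc] at ht
        exact ((hgd t (Ioo_subset_Icc_self ht)).differentiableAt).differentiableWithinAt
      · intro t ht
        rw [interior_Icc] at ht
        have ht' := Ioo_subset_Icc_self ht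
        rw [(hgd t ht').deriv]
        exact hdecr t ht' (x t) (hxX t ht')
    have h0T : g T ≤ g 0 :=
      hanti (left_mem_Icc.2 hT.le) (right_mem_Icc.2 hT.le) hT.le
    have hT0 : (0 : ℝ) ≤ g T := hvT (x T) hxM
    have hx0X : x₀ ∈ X := hx0 ▸ hxX 0 (left_mem_Icc.2 hT.le)
    have := hwv x₀ hx0X
    have hg0 : g 0 = v (0, x₀) := by rw [hg]; simp [hx0]
    linarith [hT0.trans h0T, hg0 ▸ (hT0.trans h0T)]
  -- Step 2: measure bound.
  have hRX : RoA f X M T ⊆ X := by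
    rintro x₀ ⟨x, hx0, _, hxX, _⟩
    exact hx0 ▸ hxX 0 (left_mem_Icc.2 hT.le)
  calc volume (RoA f X M T) = ∫⁻ y in RoA f X M T, 1 := (setLIntegral_one _).symm
    _ ≤ ∫⁻ y in RoA f X M T, ENNReal.ofReal (w y) := by
        refine lintegral_mono_ae (ae_restrict_of_forall_mem hRm ?_)
        intro y hy
        simpa using ENNReal.one_le_ofReal.2 (key y hy)
    _ ≤ ∫⁻ y in X, ENNReal.ofReal (w y) := lintegral_mono_set hRX
    _ = ENNReal.ofReal (∫ y in X, w y) := by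
        rw [← ofReal_integral_eq_lintegral_ofReal hwint
          (ae_restrict_of_forall_mem hXm hw0)]
end

section
/- Let f : ℝⁿ → ℝⁿ be continuous, X ⊆ ℝⁿ closed, M ⊆ X closed, and T > 0. Suppose v : ℝ × ℝⁿ → ℝ is of class C¹ and w : ℝⁿ → ℝ satisfy: w(y) ≥ 0 for all y ∈ X; w(y) ≥ v(0,y) + 1 for all y ∈ X; ∂_t v(t,y) + ⟨∇_x v(t,y), f(y)⟩ ≤ 0 for all (t,y) ∈ [0,T] × X; and v(T,y) ≥ 0 for all y ∈ M. Then the chain of inclusions R_T^M ⊆ {y ∈ ℝⁿ : v(0,y) ≥ 0} ∩ X ⊆ {y ∈ X : w(y) ≥ 1} holds. -/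
open Set

/-- outer-approximation proposition: for any feasible pair `(v, w)` of the
outer RoA linear program (`w ≥ 0` on `X`, `w ≥ v(0,·) + 1` on `X`,
`∂ₜ v + ⟨∇ₓ v, f⟩ ≤ 0` on `[0,T] × X` — encoded via the Fréchet derivative of `v` applied to
`(1, f y)` — and `v(T,·) ≥ 0` on `M`), the chain of inclusions
`R_T^M ⊆ {v(0,·) ≥ 0} ∩ X ⊆ {y ∈ X : w(y) ≥ 1}` holds. -/
theorem sostab_stmt14 {n : ℕ}
    (f : EuclideanSpace ℝ (Fin n) → EuclideanSpace ℝ (Fin n)) (hf : Continuous f)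
    (X : Set (EuclideanSpace ℝ (Fin n))) (hX : IsClosed X)
    (M : Set (EuclideanSpace ℝ (Fin n))) (hM : IsClosed M) (hMX : M ⊆ X)
    (T : ℝ) (hT : 0 < T)
    (v : ℝ × EuclideanSpace ℝ (Fin n) → ℝ) (hv : ContDiff ℝ 1 v)
    (w : EuclideanSpace ℝ (Fin n) → ℝ)
    (hw0 : ∀ y ∈ X, 0 ≤ w y)
    (hwv : ∀ y ∈ X, v (0, y) + 1 ≤ w y)
    (hdecr : ∀ t ∈ Icc (0 : ℝ) T, ∀ y ∈ X, fderiv ℝ v (t, y) (1, f y) ≤ 0)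
    (hvT : ∀ y ∈ M, 0 ≤ v (T, y)) :
    RoA f X M T ⊆ {y | 0 ≤ v (0, y)} ∩ X ∧
      {y | 0 ≤ v (0, y)} ∩ X ⊆ {y | y ∈ X ∧ 1 ≤ w y} := by
  constructor
  · rintro x₀ ⟨x, hx0, hderiv, hXmem, hTmem⟩
    set g : ℝ → ℝ := fun t => v (t, x t) with hg
    have hgderiv : ∀ t ∈ Icc (0 : ℝ) T,
        HasDerivAt g (fderiv ℝ v (t, x t) (1, f (x t))) t := by
      intro t ht
      have h1 : HasDerivAt (fun s : ℝ => ((s, x s) : ℝ × EuclideanSpace ℝ (Fin n)))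
          (1, f (x t)) t := (hasDerivAt_id t).prodMk (hderiv t ht)
      have h2 : HasFDerivAt v (fderiv ℝ v (t, x t)) (t, x t) :=
        (hv.differentiable one_ne_zero (t, x t)).hasFDerivAt
      exact h2.comp_hasDerivAt t h1
    have hanti : AntitoneOn g (Icc 0 T) := by
      apply antitoneOn_of_deriv_nonpos (convex_Icc 0 T)
      · exact ContinuousOn.comp hv.continuous.continuousOn
          (continuous_id.continuousOn.prodMk fun t ht =>
            (hderiv t ht).continuousAt.continuousWithinAt) (mapsTo_univ _ _)
      · intro t ht
        exact ((hgderiv t (interior_subset ht)).differentiableAt).differentiableWithinAt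
      · intro t ht
        rw [interior_Icc] at ht
        have ht' : t ∈ Icc (0 : ℝ) T := Ioo_subset_Icc_self ht
        rw [(hgderiv t ht').deriv]
        exact hdecr t ht' (x t) (hXmem t ht')
    have h0T : g T ≤ g 0 := hanti (left_mem_Icc.2 hT.le) (right_mem_Icc.2 hT.le) hT.le
    have hvT' : 0 ≤ g T := hvT (x T) hTmem
    constructor
    · show 0 ≤ v (0, x₀)
      rw [← hx0]
      exact hvT'.trans h0T
    · rw [← hx0]; exact hXmem 0 (left_mem_Icc.2 hT.le)
  · rintro y ⟨hy, hyX⟩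
    refine ⟨hyX, ?_⟩
    have := hwv y hyX
    have h0 : (0 : ℝ) ≤ v (0, y) := hy
    linarith
end
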